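/- For m₁ − m₂ = 1 (with m₂ even), the unique solution φ of φ'(t) = cot(τ₀ − φ(t)), φ(0) = 0, with values in [0, τ₀) for fixed τ₀ ∈ (0, π/2), satisfies cos(τ₀ − φ(t)) = e^t · cos(τ₀), and the collapsing time is T = log(sec τ₀). -/

import Mathlib

open Real Filter

/-- The solution of `φ' = cot(τ₀ − φ)`, `φ(0) = 0`, with values in `[0, τ₀)`,
`τ₀ ∈ (0, π/2)`, satisfies `cos(τ₀ − φ(t)) = e^t·cos τ₀`, and the collapsing time is
`T = log(sec τ₀)`. -/
theorem stmt_10 (τ₀ T : ℝ) (hτ₀ : 0 < τ₀) (hτ₀' : τ₀ < π / 2) (hT : 0 < T)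
    (φ : ℝ → ℝ) (h0 : φ 0 = 0)
    (hrange : ∀ t ∈ Set.Ico (0 : ℝ) T, φ t ∈ Set.Ico (0 : ℝ) τ₀)
    (hode : ∀ t ∈ Set.Ico (0 : ℝ) T,
      HasDerivAt φ (Real.cos (τ₀ - φ t) / Real.sin (τ₀ - φ t)) t) :
    (∀ t ∈ Set.Ico (0 : ℝ) T, Real.cos (τ₀ - φ t) = Real.exp t * Real.cos τ₀) ∧
      (Tendsto φ (nhdsWithin T (Set.Iio T)) (nhds τ₀) →
        T = Real.log (1 / Real.cos τ₀)) := by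
  set g : ℝ → ℝ := fun t => Real.cos (τ₀ - φ t) * Real.exp (-t) with hg_def
  have hsin : ∀ t ∈ Set.Ico (0 : ℝ) T, 0 < Real.sin (τ₀ - φ t) := by
    intro t ht
    obtain ⟨h1, h2⟩ := hrange t ht
    apply Real.sin_pos_of_pos_of_lt_pi
    · linarith
    · nlinarith [Real.pi_pos]
  have hg : ∀ t ∈ Set.Ico (0 : ℝ) T, HasDerivAt g 0 t := by
    intro t ht
    have h1 := hode t ht
    have hs := hsin t ht
    have h2 : HasDerivAt (fun t => τ₀ - φ t)
        (-(Real.cos (τ₀ - φ t) / Real.sin (τ₀ - φ t))) t :=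
      ((hasDerivAt_const t τ₀).sub h1).congr_deriv (by ring)
    have h3 : HasDerivAt (fun t => Real.cos (τ₀ - φ t)) (Real.cos (τ₀ - φ t)) t := by
      have := (Real.hasDerivAt_cos (τ₀ - φ t)).comp t h2
      exact this.congr_deriv (by
        rw [neg_mul_neg, mul_div_assoc', mul_div_right_comm, div_self hs.ne', one_mul])
    have h4 : HasDerivAt (fun t : ℝ => Real.exp (-t)) (-Real.exp (-t)) t := by
      have := (Real.hasDerivAt_exp (-t)).comp t (hasDerivAt_neg t)
      exact this.congr_deriv (by ring)
    have := h3.mul h4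
    exact this.congr_deriv (by ring)
  have key : ∀ t ∈ Set.Ico (0 : ℝ) T, g t = Real.cos τ₀ := by
    intro t ht
    obtain ⟨ht0, htT⟩ := ht
    have hsub : Set.Icc (0 : ℝ) t ⊆ Set.Ico (0 : ℝ) T := fun x hx =>
      ⟨hx.1, lt_of_le_of_lt hx.2 htT⟩
    have hconst := constant_of_has_deriv_right_zero
      (f := g) (a := 0) (b := t)
      (fun x hx => ((hg x (hsub hx)).continuousAt).continuousWithinAt)
      (fun x hx => (hg x (hsub ⟨hx.1, hx.2.le⟩)).hasDerivWithinAt)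
    have := hconst t ⟨ht0, le_refl t⟩
    simpa [hg_def, h0] using this
  have main : ∀ t ∈ Set.Ico (0 : ℝ) T, Real.cos (τ₀ - φ t) = Real.exp t * Real.cos τ₀ := by
    intro t ht
    have := key t ht
    have he : Real.exp (-t) ≠ 0 := Real.exp_ne_zero _
    rw [← this]
    show Real.cos (τ₀ - φ t) = Real.exp t * (Real.cos (τ₀ - φ t) * Real.exp (-t))
    rw [mul_left_comm, ← Real.exp_add]
    simp
  refine ⟨main, fun hlim => ?_⟩
  have hcosτ : 0 < Real.cos τ₀ := Real.cos_pos_of_mem_Ioo ⟨by linarith, hτ₀'⟩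
  have h1 : Tendsto (fun t => Real.cos (τ₀ - φ t)) (nhdsWithin T (Set.Iio T)) (nhds 1) := by
    have : Tendsto (fun t => τ₀ - φ t) (nhdsWithin T (Set.Iio T)) (nhds 0) := by
      have := (tendsto_const_nhds (x := τ₀)).sub hlim
      simpa using this
    have := (Real.continuous_cos.tendsto 0).comp this
    rw [Real.cos_zero] at this
    exact this
  have h2 : Tendsto (fun t => Real.exp t * Real.cos τ₀) (nhdsWithin T (Set.Iio T))
      (nhds (Real.exp T * Real.cos τ₀)) := by
    exact ((Real.continuous_exp.tendsto T).mul tendsto_const_nhds).mono_left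
      nhdsWithin_le_nhds
  have hev : ∀ᶠ t in nhdsWithin T (Set.Iio T),
      Real.cos (τ₀ - φ t) = Real.exp t * Real.cos τ₀ := by
    have h0' : ∀ᶠ t in nhdsWithin T (Set.Iio T), (0:ℝ) < t :=
      eventually_nhdsWithin_of_eventually_nhds (eventually_gt_nhds hT)
    filter_upwards [h0', self_mem_nhdsWithin] with t ht1 ht2
    exact main t ⟨ht1.le, ht2⟩
  have h1' : Tendsto (fun t => Real.exp t * Real.cos τ₀) (nhdsWithin T (Set.Iio T)) (nhds 1) :=
    h1.congr' hev
  have huniq : Real.exp T * Real.cos τ₀ = 1 := tendsto_nhds_unique h2 h1'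
  have hexp : Real.exp T = 1 / Real.cos τ₀ := by
    field_simp
    linarith
  rw [← hexp, Real.log_exp]
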